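/- Let Ω⊂ℝ^n be a bounded domain with a C^∞(Ω̄) defining function ρ such that (1−|∇ρ|²)/ρ extends to a function in C^∞(Ω̄). Let a>0, b, c, s be real constants with s>0 and a s(s−1) + b s + c = 0, and assume aμ(μ−1)+bμ+c ≠ 0 for μ = s+1, …, s+m, where m≥1 is an integer. Let L = aρ²Δ + bρ∇ρ·∇ + c. Then for every ψ_0 ∈ C^∞(Ω̄) there exist ψ_1, …, ψ_m ∈ C^∞(Ω̄) and η ∈ C^∞(Ω̄) such that L((Σ_{l=0}^m ψ_l ρ^l)ρ^s) = η ρ^{s+m+1} in Ω. -/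

import Mathlib

open Set Filter Topology

noncomputable section

abbrev En (n : ℕ) : Type := EuclideanSpace ℝ (Fin n)

variable {n : ℕ}

/-- The partial derivative `∂ᵢ w` (computed with the full-space derivative). -/
noncomputable def pd (i : Fin n) (w : En n → ℝ) (x : En n) : ℝ :=
  fderiv ℝ w x (EuclideanSpace.single i 1)

/-- Iterated partial derivatives along a list of coordinate directions. -/
noncomputable def pdAll : List (Fin n) → (En n → ℝ) → En n → ℝ
  | [], w => w
  | i :: l, w => pd i (pdAll l w)

/-- Second-order partial derivative `∂ᵢ∂ⱼ w`. -/
noncomputable def pd2 (i j : Fin n) (w : En n → ℝ) : En n → ℝ := pd i (pd j w)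

/-- The sup norm `|w|_{L^∞(E)}`. -/
noncomputable def supNorm (E : Set (En n)) (w : En n → ℝ) : ℝ :=
  sSup ((fun x => |w x|) '' E)

/-- The Hölder seminorm `[w]_{C^β(E)}`. -/
noncomputable def holderSemi (β : ℝ) (E : Set (En n)) (w : En n → ℝ) : ℝ :=
  sSup ((fun p : En n × En n => |w p.1 - w p.2| / dist p.1 p.2 ^ β) '' (E ×ˢ E))

/-- The Hölder norm `|w|_{C^β(E)} = |w|_{L^∞(E)} + [w]_{C^β(E)}`. -/
noncomputable def holderNorm (β : ℝ) (E : Set (En n)) (w : En n → ℝ) : ℝ :=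
  supNorm E w + holderSemi β E w

/-- `w` is `β`-Hölder continuous on `E`. -/
def IsHolderOn (β : ℝ) (E : Set (En n)) (w : En n → ℝ) : Prop :=
  ∃ C : ℝ, ∀ x ∈ E, ∀ y ∈ E, |w x - w y| ≤ C * dist x y ^ β

/-- `w` is bounded on `E`. -/
def BoundedOn (E : Set (En n)) (w : En n → ℝ) : Prop :=
  ∃ M : ℝ, ∀ x ∈ E, |w x| ≤ M

/-- `w ∈ C^{k,β}(Ē)`: `w` is `C^k` in the open set `Ω`, all derivatives of order `≤ k`
extend continuously to the closure, and the order-`k` derivatives are `β`-Hölder. -/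
def MemHolderBar (k : ℕ) (β : ℝ) (Ω : Set (En n)) (w : En n → ℝ) : Prop :=
  ContinuousOn w (closure Ω) ∧ ContDiffOn ℝ k w Ω ∧
  (∀ l : List (Fin n), l.length ≤ k →
    ∃ g : En n → ℝ, ContinuousOn g (closure Ω) ∧ EqOn (pdAll l w) g Ω) ∧
  (∀ l : List (Fin n), l.length = k → IsHolderOn β Ω (pdAll l w))

/-- `w ∈ C^{k,β}(Ω)`: the interior Hölder class (Hölder on compact subsets). -/
def MemHolderLoc (k : ℕ) (β : ℝ) (Ω : Set (En n)) (w : En n → ℝ) : Prop :=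
  ContDiffOn ℝ k w Ω ∧
  ∀ K : Set (En n), K ⊆ Ω → IsCompact K →
    ∀ l : List (Fin n), l.length = k → IsHolderOn β K (pdAll l w)

/-- The norm `|w|_{C^{k,β}(Ē)}`. -/
noncomputable def holderNormCk (k : ℕ) (β : ℝ) (Ω : Set (En n)) (w : En n → ℝ) : ℝ :=
  (∑ i ∈ Finset.range (k + 1), ∑ v : Fin i → Fin n, supNorm Ω (pdAll (List.ofFn v) w)) +
  ∑ v : Fin k → Fin n, holderSemi β Ω (pdAll (List.ofFn v) w)

/-- The uniformly degenerate operator `L = ρ² a_{ij}∂_{ij} + ρ b_i ∂_i + c`. -/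
noncomputable def Lop (ρ : En n → ℝ) (a : Fin n → Fin n → En n → ℝ)
    (b : Fin n → En n → ℝ) (c : En n → ℝ) (w : En n → ℝ) (x : En n) : ℝ :=
  (ρ x) ^ 2 * ∑ i, ∑ j, a i j x * pd2 i j w x
    + ρ x * ∑ i, b i x * pd i w x + c x * w x

/-- Symmetry and uniform ellipticity `λ|ξ|² ≤ a_{ij}ξ_iξ_j ≤ Λ|ξ|²` on `E`. -/
def Elliptic (E : Set (En n)) (a : Fin n → Fin n → En n → ℝ) (lam Lam : ℝ) : Prop :=
  (∀ i j, ∀ x : En n, a i j x = a j i x) ∧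
  ∀ x ∈ E, ∀ ξ : Fin n → ℝ,
    lam * (∑ i, ξ i ^ 2) ≤ (∑ i, ∑ j, a i j x * ξ i * ξ j) ∧
    (∑ i, ∑ j, a i j x * ξ i * ξ j) ≤ Lam * (∑ i, ξ i ^ 2)

/-- The characteristic polynomial `P(μ) = μ(μ-1)a_{ij}ν_iν_j + μ b_iν_i + c`,
expressed through a function `ν` recording the boundary values of `∇ρ`. -/
def Pchar (a : Fin n → Fin n → En n → ℝ) (b : Fin n → En n → ℝ) (c : En n → ℝ)
    (ν : En n → Fin n → ℝ) (μ : ℝ) (x : En n) : ℝ :=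
  μ * (μ - 1) * (∑ i, ∑ j, a i j x * ν x i * ν x j) + μ * (∑ i, b i x * ν x i) + c x

/-- `ρ` is a defining function for `Ω`, with `ν` the continuous extension of `∇ρ`
to the closure, of unit length on the boundary. -/
def DefiningFn (Ω : Set (En n)) (ρ : En n → ℝ) (ν : En n → Fin n → ℝ) : Prop :=
  (∀ x ∈ Ω, 0 < ρ x) ∧ (∀ x ∈ frontier Ω, ρ x = 0) ∧
  ContinuousOn ρ (closure Ω) ∧ ContDiffOn ℝ 1 ρ Ω ∧
  (∀ i, ContinuousOn (fun x => ν x i) (closure Ω)) ∧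
  (∀ x ∈ Ω, ∀ i, ν x i = pd i ρ x) ∧
  (∀ x ∈ frontier Ω, (∑ i, (ν x i) ^ 2) = 1)

end

open Set Filter Topology

/-- `w ∈ C^∞(Ω̄)`: smooth in `Ω` with all derivatives extending continuously to `Ω̄`. -/
def SmoothBar {n : ℕ} (Ω : Set (En n)) (w : En n → ℝ) : Prop :=
  ContDiffOn ℝ (⊤ : ℕ∞) w Ω ∧
  ∀ l : List (Fin n), ∃ g : En n → ℝ,
    ContinuousOn g (closure Ω) ∧ EqOn (pdAll l w) g Ω

/-- The operator `L = aρ²Δ + bρ∇ρ·∇ + c` (with constant coefficients `a, b, c`). -/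
noncomputable def LopEx {n : ℕ} (ρ : En n → ℝ) (a b c : ℝ) (w : En n → ℝ) (x : En n) : ℝ :=
  a * (ρ x) ^ 2 * (∑ i, pd2 i i w x)
    + b * ρ x * (∑ i, pd i ρ x * pd i w x) + c * w x

section Helpers

open Set

variable {n : ℕ} {Ω : Set (En n)}

theorem diffAt_of_cdo {f : En n → ℝ} (hΩ : IsOpen Ω)
    (hf : ContDiffOn ℝ (⊤:ℕ∞) f Ω) {x : En n} (hx : x ∈ Ω) :
    DifferentiableAt ℝ f x :=
  (hf.contDiffAt (hΩ.mem_nhds hx)).differentiableAt (by simp)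

theorem pd_congr (hΩ : IsOpen Ω) {f g : En n → ℝ}
    (h : EqOn f g Ω) {x : En n} (hx : x ∈ Ω) (i : Fin n) : pd i f x = pd i g x := by
  unfold pd
  rw [Filter.EventuallyEq.fderiv_eq (Filter.eventuallyEq_of_mem (hΩ.mem_nhds hx) h)]

theorem pdAll_congr (hΩ : IsOpen Ω) {f g : En n → ℝ}
    (h : EqOn f g Ω) (l : List (Fin n)) : EqOn (pdAll l f) (pdAll l g) Ω := by
  induction l with
  | nil => exact h
  | cons i l ih => intro x hx; exact pd_congr hΩ ih hx i

theorem pdAll_append {w : En n → ℝ} (l : List (Fin n)) (i : Fin n) :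
    pdAll (l ++ [i]) w = pdAll l (pd i w) := by
  induction l with
  | nil => rfl
  | cons j l ih =>
    show pdAll ((j :: l) ++ [i]) w = pd j (pdAll l (pd i w))
    have : (j :: l) ++ [i] = j :: (l ++ [i]) := rfl
    rw [this]
    show pd j (pdAll (l ++ [i]) w) = _
    rw [ih]

theorem contDiffOn_pd (hΩ : IsOpen Ω) {f : En n → ℝ}
    (hf : ContDiffOn ℝ (⊤:ℕ∞) f Ω) (i : Fin n) : ContDiffOn ℝ (⊤:ℕ∞) (pd i f) Ω := by
  have h1 : ContDiffOn ℝ (⊤:ℕ∞) (fderiv ℝ f) Ω := hf.fderiv_of_isOpen hΩ (by exact_mod_cast le_top)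
  have : ContDiffOn ℝ (⊤:ℕ∞) (fun x => (fderiv ℝ f x) (EuclideanSpace.single i 1)) Ω :=
    h1.clm_apply contDiffOn_const
  exact this

theorem contDiffOn_pdAll (hΩ : IsOpen Ω) {f : En n → ℝ}
    (hf : ContDiffOn ℝ (⊤:ℕ∞) f Ω) (l : List (Fin n)) : ContDiffOn ℝ (⊤:ℕ∞) (pdAll l f) Ω := by
  induction l with
  | nil => exact hf
  | cons i l ih => exact contDiffOn_pd hΩ ih i

theorem pd_add {f g : En n → ℝ} {x : En n} (hf : DifferentiableAt ℝ f x)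
    (hg : DifferentiableAt ℝ g x) (i : Fin n) :
    pd i (fun y => f y + g y) x = pd i f x + pd i g x := by
  unfold pd; rw [fderiv_fun_add hf hg]; rfl

theorem pd_mul {f g : En n → ℝ} {x : En n} (hf : DifferentiableAt ℝ f x)
    (hg : DifferentiableAt ℝ g x) (i : Fin n) :
    pd i (fun y => f y * g y) x = f x * pd i g x + g x * pd i f x := by
  unfold pd; rw [fderiv_fun_mul hf hg]; rfl

theorem pd_const_mul {f : En n → ℝ} {x : En n} (hf : DifferentiableAt ℝ f x)
    (c : ℝ) (i : Fin n) :
    pd i (fun y => c * f y) x = c * pd i f x := by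
  unfold pd; rw [fderiv_const_mul hf]; rfl

theorem pd_const (c : ℝ) (x : En n) (i : Fin n) : pd i (fun _ => c) x = 0 := by
  unfold pd; rw [fderiv_fun_const]; rfl

theorem pd_sum {ι : Type*} {u : Finset ι} {A : ι → En n → ℝ} {x : En n}
    (h : ∀ j ∈ u, DifferentiableAt ℝ (A j) x) (i : Fin n) :
    pd i (fun y => ∑ j ∈ u, A j y) x = ∑ j ∈ u, pd i (A j) x := by
  unfold pd; rw [fderiv_fun_sum h]; simp

theorem pd_rpow {f : En n → ℝ} {x : En n} (hf : DifferentiableAt ℝ f x)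
    (hfx : f x ≠ 0) (t : ℝ) (i : Fin n) :
    pd i (fun y => f y ^ t) x = t * f x ^ (t - 1) * pd i f x := by
  unfold pd
  rw [(hf.hasFDerivAt.rpow_const (Or.inl hfx)).fderiv]
  simp [mul_assoc]

end Helpers
section Helpers2

open Set

variable {n : ℕ} {Ω : Set (En n)}

theorem smoothBar_pd (hΩ : IsOpen Ω) {w : En n → ℝ} (hw : SmoothBar Ω w) (i : Fin n) :
    SmoothBar Ω (pd i w) := by
  refine ⟨contDiffOn_pd hΩ hw.1 i, fun l => ?_⟩
  obtain ⟨g, hg, he⟩ := hw.2 (l ++ [i])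
  exact ⟨g, hg, by rwa [pdAll_append] at he⟩

theorem pdAll_add_eqOn (hΩ : IsOpen Ω) {f g : En n → ℝ}
    (hf : ContDiffOn ℝ (⊤:ℕ∞) f Ω) (hg : ContDiffOn ℝ (⊤:ℕ∞) g Ω) (l : List (Fin n)) :
    EqOn (pdAll l (fun y => f y + g y)) (fun y => pdAll l f y + pdAll l g y) Ω := by
  induction l with
  | nil => intro x _; rfl
  | cons i l ih =>
    intro x hx
    have h1 : pd i (pdAll l fun y => f y + g y) x
        = pd i (fun y => pdAll l f y + pdAll l g y) x := pd_congr hΩ ih hx i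
    show pd i (pdAll l fun y => f y + g y) x = _
    rw [h1, pd_add (diffAt_of_cdo hΩ (contDiffOn_pdAll hΩ hf l) hx)
      (diffAt_of_cdo hΩ (contDiffOn_pdAll hΩ hg l) hx)]
    rfl

theorem smoothBar_add (hΩ : IsOpen Ω) {f g : En n → ℝ} (hf : SmoothBar Ω f)
    (hg : SmoothBar Ω g) : SmoothBar Ω (fun y => f y + g y) := by
  refine ⟨hf.1.add hg.1, fun l => ?_⟩
  obtain ⟨gf, hgf, hef⟩ := hf.2 l
  obtain ⟨gg, hgg, heg⟩ := hg.2 l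
  refine ⟨fun y => gf y + gg y, hgf.add hgg, fun x hx => ?_⟩
  rw [pdAll_add_eqOn hΩ hf.1 hg.1 l hx]
  simp only [hef hx, heg hx]

theorem pdAll_const (c : ℝ) (l : List (Fin n)) :
    pdAll l (fun _ : En n => c) = (fun _ => c) ∨ pdAll l (fun _ : En n => c) = fun _ => 0 := by
  induction l with
  | nil => exact Or.inl rfl
  | cons i l ih =>
    right
    show pd i (pdAll l fun _ => c) = fun _ => 0
    rcases ih with h | h <;> rw [h] <;> funext x <;> exact pd_const _ x i

theorem smoothBar_const (c : ℝ) : SmoothBar Ω (fun _ => c) := by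
  refine ⟨contDiffOn_const, fun l => ?_⟩
  rcases pdAll_const c l with h | h
  · exact ⟨fun _ => c, continuousOn_const, by rw [h]; exact fun x _ => rfl⟩
  · exact ⟨fun _ => 0, continuousOn_const, by rw [h]; exact fun x _ => rfl⟩

theorem smoothBar_mul (hΩ : IsOpen Ω) {f g : En n → ℝ} (hf : SmoothBar Ω f)
    (hg : SmoothBar Ω g) : SmoothBar Ω (fun y => f y * g y) := by
  refine ⟨hf.1.mul hg.1, fun l => ?_⟩
  induction l using List.reverseRecOn generalizing f g with
  | nil =>
    obtain ⟨gf, hgf, hef⟩ := hf.2 []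
    obtain ⟨gg, hgg, heg⟩ := hg.2 []
    refine ⟨fun y => gf y * gg y, hgf.mul hgg, fun x hx => ?_⟩
    have h1 : f x = gf x := hef hx
    have h2 : g x = gg x := heg hx
    show f x * g x = gf x * gg x
    rw [h1, h2]
  | append_singleton l i ih =>
    obtain ⟨g1, hg1, he1⟩ := ih (smoothBar_pd hΩ hf i) hg
    obtain ⟨g2, hg2, he2⟩ := ih hf (smoothBar_pd hΩ hg i)
    refine ⟨fun y => g1 y + g2 y, hg1.add hg2, fun x hx => ?_⟩
    rw [pdAll_append]
    have hmul : EqOn (pd i (fun y => f y * g y))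
        (fun y => pd i f y * g y + f y * pd i g y) Ω := by
      intro y hy
      rw [pd_mul (diffAt_of_cdo hΩ hf.1 hy) (diffAt_of_cdo hΩ hg.1 hy)]
      ring
    have h1 : pdAll l (pd i fun y => f y * g y) x
        = pdAll l (fun y => pd i f y * g y + f y * pd i g y) x :=
      pdAll_congr hΩ hmul l hx
    have h2 := pdAll_add_eqOn hΩ ((contDiffOn_pd hΩ hf.1 i).mul hg.1)
      (hf.1.mul (contDiffOn_pd hΩ hg.1 i)) l hx
    rw [h1, h2]
    show pdAll l (fun y => pd i f y * g y) x + pdAll l (fun y => f y * pd i g y) x = _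
    rw [he1 hx, he2 hx]

end Helpers2
section Helpers3

open Set

variable {n : ℕ} {Ω : Set (En n)}

theorem smoothBar_finsum (hΩ : IsOpen Ω) {ι : Type*} (u : Finset ι) (A : ι → En n → ℝ)
    (hA : ∀ j ∈ u, SmoothBar Ω (A j)) : SmoothBar Ω (fun y => ∑ j ∈ u, A j y) := by
  classical
  induction u using Finset.cons_induction with
  | empty => simpa using smoothBar_const (Ω := Ω) 0
  | cons j u hju ih =>
    simp only [Finset.sum_cons]
    exact smoothBar_add hΩ (hA j (Finset.mem_cons_self j u))
      (ih fun k hk => hA k (Finset.mem_cons_of_mem hk))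

/-- The first-order "remainder" operator `M_t`. -/
noncomputable def Mop (ρ q : En n → ℝ) (a b t : ℝ) (ψ : En n → ℝ) (x : En n) : ℝ :=
  a * ρ x * (∑ i, pd2 i i ψ x) + (2*a*t + b) * (∑ i, pd i ρ x * pd i ψ x)
  + (a * t * (∑ i, pd2 i i ρ x) - (a*t*(t-1) + b*t) * q x) * ψ x

theorem smoothBar_Mop (hΩ : IsOpen Ω) {ρ q ψ : En n → ℝ} (hρ : SmoothBar Ω ρ)
    (hq : SmoothBar Ω q) (hψ : SmoothBar Ω ψ) (a b t : ℝ) :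
    SmoothBar Ω (Mop ρ q a b t ψ) := by
  have laps : ∀ w : En n → ℝ, SmoothBar Ω w → SmoothBar Ω (fun x => ∑ i, pd2 i i w x) :=
    fun w hw => smoothBar_finsum hΩ _ _ fun i _ => smoothBar_pd hΩ (smoothBar_pd hΩ hw i) i
  have grads : SmoothBar Ω (fun x => ∑ i, pd i ρ x * pd i ψ x) :=
    smoothBar_finsum hΩ _ _ fun i _ =>
      smoothBar_mul hΩ (smoothBar_pd hΩ hρ i) (smoothBar_pd hΩ hψ i)
  unfold Mop
  refine smoothBar_add hΩ (smoothBar_add hΩ ?_ ?_) ?_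
  · exact smoothBar_mul hΩ (smoothBar_mul hΩ (smoothBar_const a) hρ) (laps ψ hψ)
  · exact smoothBar_mul hΩ (smoothBar_const _) grads
  · refine smoothBar_mul hΩ ?_ hψ
    have h1 : SmoothBar Ω (fun x => a * t * (∑ i, pd2 i i ρ x)) :=
      smoothBar_mul hΩ (smoothBar_const _) (laps ρ hρ)
    have h2 : SmoothBar Ω (fun x => -((a*t*(t-1) + b*t)) * q x) :=
      smoothBar_mul hΩ (smoothBar_const _) hq
    have := smoothBar_add hΩ h1 h2
    refine ⟨this.1.congr fun x _ => by ring, fun l => ?_⟩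
    obtain ⟨g, hg, he⟩ := this.2 l
    refine ⟨g, hg, fun x hx => ?_⟩
    rw [← he hx]
    refine pdAll_congr hΩ (fun y _ => by ring) l hx

theorem lopEx_congr (hΩ : IsOpen Ω) (ρ : En n → ℝ) (a b c : ℝ) {F G : En n → ℝ}
    (h : EqOn F G Ω) {x : En n} (hx : x ∈ Ω) :
    LopEx ρ a b c F x = LopEx ρ a b c G x := by
  unfold LopEx
  have h2 : ∀ i j : Fin n, pd2 i j F x = pd2 i j G x := by
    intro i j
    exact pd_congr hΩ (fun y hy => pd_congr hΩ h hy j) hx i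
  have h1 : ∀ i : Fin n, pd i F x = pd i G x := fun i => pd_congr hΩ h hx i
  rw [h hx]
  congr 2
  · congr 1; exact Finset.sum_congr rfl fun i _ => h2 i i
  · congr 1; exact Finset.sum_congr rfl fun i _ => by rw [h1 i]

theorem lopEx_sum (hΩ : IsOpen Ω) (ρ : En n → ℝ) (a b c : ℝ) {ι : Type*}
    (u : Finset ι) (A : ι → En n → ℝ) (hA : ∀ j ∈ u, ContDiffOn ℝ (⊤:ℕ∞) (A j) Ω)
    {x : En n} (hx : x ∈ Ω) :
    LopEx ρ a b c (fun y => ∑ j ∈ u, A j y) x = ∑ j ∈ u, LopEx ρ a b c (A j) x := by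
  have hdi : ∀ j ∈ u, ∀ y ∈ Ω, DifferentiableAt ℝ (A j) y :=
    fun j hj y hy => diffAt_of_cdo hΩ (hA j hj) hy
  have h1 : ∀ y ∈ Ω, ∀ i : Fin n, pd i (fun z => ∑ j ∈ u, A j z) y = ∑ j ∈ u, pd i (A j) y :=
    fun y hy i => pd_sum (fun j hj => hdi j hj y hy) i
  have h2 : ∀ i k : Fin n, pd2 i k (fun z => ∑ j ∈ u, A j z) x = ∑ j ∈ u, pd2 i k (A j) x := by
    intro i k
    have e1 : pd2 i k (fun z => ∑ j ∈ u, A j z) x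
        = pd i (fun y => ∑ j ∈ u, pd k (A j) y) x :=
      pd_congr hΩ (fun y hy => h1 y hy k) hx i
    rw [e1, pd_sum (fun j hj => diffAt_of_cdo hΩ (contDiffOn_pd hΩ (hA j hj) k) hx) i]
    rfl
  have e1 : (∑ i, pd2 i i (fun z => ∑ j ∈ u, A j z) x) = ∑ j ∈ u, ∑ i, pd2 i i (A j) x := by
    rw [Finset.sum_congr rfl fun i _ => h2 i i]; exact Finset.sum_comm
  have e2 : (∑ i, pd i ρ x * pd i (fun z => ∑ j ∈ u, A j z) x)
      = ∑ j ∈ u, ∑ i, pd i ρ x * pd i (A j) x := by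
    rw [Finset.sum_congr rfl fun i (_ : i ∈ Finset.univ) => by rw [h1 x hx i, Finset.mul_sum]]
    exact Finset.sum_comm
  unfold LopEx
  rw [e1, e2]
  simp only [Finset.mul_sum, ← Finset.sum_add_distrib]

end Helpers3
section Helpers4

open Set

variable {n : ℕ} {Ω : Set (En n)}

theorem lop_term (hΩ : IsOpen Ω) {ρ q ψ : En n → ℝ}
    (hρ : ContDiffOn ℝ (⊤:ℕ∞) ρ Ω) (hρpos : ∀ x ∈ Ω, 0 < ρ x)
    (hq' : ∀ x ∈ Ω, 1 - (∑ i, (pd i ρ x) ^ 2) = ρ x * q x)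
    (hψ : ContDiffOn ℝ (⊤:ℕ∞) ψ Ω) (a b c t : ℝ) {x : En n} (hx : x ∈ Ω) :
    LopEx ρ a b c (fun y => ψ y * ρ y ^ t) x
      = (a*t*(t-1) + b*t + c) * (ψ x * ρ x ^ t) + ρ x ^ (t+1) * Mop ρ q a b t ψ x := by
  -- differentiability facts
  have hρd : ∀ y ∈ Ω, DifferentiableAt ℝ ρ y := fun y hy => diffAt_of_cdo hΩ hρ hy
  have hψd : ∀ y ∈ Ω, DifferentiableAt ℝ ψ y := fun y hy => diffAt_of_cdo hΩ hψ hy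
  have hrpow : ∀ (u : ℝ), ∀ y ∈ Ω, DifferentiableAt ℝ (fun z => ρ z ^ u) y := by
    intro u y hy
    exact ((hρ.contDiffAt (hΩ.mem_nhds hy)).rpow_const_of_ne
      (ne_of_gt (hρpos y hy))).differentiableAt (by simp)
  have hpdρd : ∀ (j : Fin n), ∀ y ∈ Ω, DifferentiableAt ℝ (pd j ρ) y :=
    fun j y hy => diffAt_of_cdo hΩ (contDiffOn_pd hΩ hρ j) hy
  have hpdψd : ∀ (j : Fin n), ∀ y ∈ Ω, DifferentiableAt ℝ (pd j ψ) y :=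
    fun j y hy => diffAt_of_cdo hΩ (contDiffOn_pd hΩ hψ j) hy
  -- first derivatives
  have hpd1 : ∀ y ∈ Ω, ∀ j : Fin n, pd j (fun z => ψ z * ρ z ^ t) y
      = pd j ψ y * ρ y ^ t + ψ y * ((t * ρ y ^ (t-1)) * pd j ρ y) := by
    intro y hy j
    rw [pd_mul (hψd y hy) (hrpow t y hy),
      pd_rpow (hρd y hy) (ne_of_gt (hρpos y hy)) t j]
    ring
  -- second derivatives (only the diagonal is needed)
  have hpd2 : ∀ i : Fin n, pd2 i i (fun z => ψ z * ρ z ^ t) x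
      = ρ x ^ t * pd2 i i ψ x
        + (2*t*ρ x ^ (t-1)) * (pd i ρ x * pd i ψ x)
        + (ψ x * (t*(t-1)*ρ x ^ (t-2))) * (pd i ρ x) ^ 2
        + (ψ x * (t*ρ x ^ (t-1))) * pd2 i i ρ x := by
    intro i
    have e0 : pd2 i i (fun z => ψ z * ρ z ^ t) x
        = pd i (fun y => pd i ψ y * ρ y ^ t + ψ y * ((t * ρ y ^ (t-1)) * pd i ρ y)) x :=
      pd_congr hΩ (fun y hy => hpd1 y hy i) hx i
    have d1 : DifferentiableAt ℝ (fun y => pd i ψ y * ρ y ^ t) x :=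
      (hpdψd i x hx).mul (hrpow t x hx)
    have dconst : DifferentiableAt ℝ (fun y => t * ρ y ^ (t-1)) x :=
      (hrpow (t-1) x hx).const_mul t
    have dinner : DifferentiableAt ℝ (fun y => (t * ρ y ^ (t-1)) * pd i ρ y) x :=
      dconst.mul (hpdρd i x hx)
    have d2 : DifferentiableAt ℝ (fun y => ψ y * ((t * ρ y ^ (t-1)) * pd i ρ y)) x :=
      (hψd x hx).mul dinner
    rw [e0, pd_add d1 d2, pd_mul (hpdψd i x hx) (hrpow t x hx),
      pd_mul (hψd x hx) dinner, pd_mul dconst (hpdρd i x hx),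
      pd_const_mul (hrpow (t-1) x hx) t,
      pd_rpow (hρd x hx) (ne_of_gt (hρpos x hx)) t,
      pd_rpow (hρd x hx) (ne_of_gt (hρpos x hx)) (t-1)]
    unfold pd2
    rw [show t - 1 - 1 = t - 2 by ring]
    ring
  -- power identities
  have hr : (0:ℝ) < ρ x := hρpos x hx
  have e1 : ρ x ^ t = ρ x ^ (t-2) * ρ x * ρ x := by
    have h : t = t - 2 + 1 + 1 := by ring
    conv_lhs => rw [h]
    rw [Real.rpow_add hr, Real.rpow_add hr, Real.rpow_one]
  have e2 : ρ x ^ (t-1) = ρ x ^ (t-2) * ρ x := by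
    have h : t - 1 = t - 2 + 1 := by ring
    conv_lhs => rw [h]
    rw [Real.rpow_add hr, Real.rpow_one]
  have e3 : ρ x ^ (t+1) = ρ x ^ (t-2) * ρ x * ρ x * ρ x := by
    have h : t + 1 = t - 2 + 1 + 1 + 1 := by ring
    conv_lhs => rw [h]
    rw [Real.rpow_add hr, Real.rpow_add hr, Real.rpow_add hr, Real.rpow_one]
  have hS : (∑ i, (pd i ρ x) ^ 2) = 1 - ρ x * q x := by
    have := hq' x hx; linarith
  -- the two sums
  have S1 : (∑ i, pd2 i i (fun z => ψ z * ρ z ^ t) x)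
      = ρ x ^ t * (∑ i, pd2 i i ψ x)
        + (2*t*ρ x ^ (t-1)) * (∑ i, pd i ρ x * pd i ψ x)
        + (ψ x * (t*(t-1)*ρ x ^ (t-2))) * (∑ i, (pd i ρ x) ^ 2)
        + (ψ x * (t*ρ x ^ (t-1))) * (∑ i, pd2 i i ρ x) := by
    have h0 : (∑ i, pd2 i i (fun z => ψ z * ρ z ^ t) x)
        = ∑ i : Fin n, (ρ x ^ t * pd2 i i ψ x
          + (2*t*ρ x ^ (t-1)) * (pd i ρ x * pd i ψ x)
          + (ψ x * (t*(t-1)*ρ x ^ (t-2))) * (pd i ρ x) ^ 2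
          + (ψ x * (t*ρ x ^ (t-1))) * pd2 i i ρ x) :=
      Finset.sum_congr rfl fun i _ => hpd2 i
    rw [h0]
    simp only [Finset.sum_add_distrib, Finset.mul_sum]
  have S2 : (∑ i, pd i ρ x * pd i (fun z => ψ z * ρ z ^ t) x)
      = ρ x ^ t * (∑ i, pd i ρ x * pd i ψ x)
        + (ψ x * (t * ρ x ^ (t-1))) * (∑ i, (pd i ρ x) ^ 2) := by
    have h0 : (∑ i, pd i ρ x * pd i (fun z => ψ z * ρ z ^ t) x)
        = ∑ i : Fin n, (ρ x ^ t * (pd i ρ x * pd i ψ x)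
          + (ψ x * (t * ρ x ^ (t-1))) * (pd i ρ x) ^ 2) :=
      Finset.sum_congr rfl fun i _ => by rw [hpd1 x hx i]; ring
    rw [h0]
    simp only [Finset.sum_add_distrib, Finset.mul_sum]
  unfold LopEx Mop
  have hFx : (fun y => ψ y * ρ y ^ t) x = ψ x * ρ x ^ t := rfl
  rw [S1, S2, hFx, hS, e1, e2, e3]
  ring
end Helpers4
section Helpers5

open Set

variable {n : ℕ}

/-- The characteristic polynomial. -/
noncomputable def Pc (a b c t : ℝ) : ℝ := a*t*(t-1) + b*t + c

/-- The recursively defined correction terms. -/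
noncomputable def psiSeq (ρ q : En n → ℝ) (a b c s : ℝ) (ψ₀ : En n → ℝ) : ℕ → En n → ℝ
  | 0 => ψ₀
  | (l+1) => fun x =>
      (-(Pc a b c (s + l + 1))⁻¹) * Mop ρ q a b (s + l) (psiSeq ρ q a b c s ψ₀ l) x

theorem psiSeq_smoothBar {Ω : Set (En n)} (hΩ : IsOpen Ω) {ρ q ψ₀ : En n → ℝ}
    (hρ : SmoothBar Ω ρ) (hq : SmoothBar Ω q) (hψ₀ : SmoothBar Ω ψ₀)
    (a b c s : ℝ) : ∀ l, SmoothBar Ω (psiSeq ρ q a b c s ψ₀ l) := by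
  intro l
  induction l with
  | zero => exact hψ₀
  | succ l ih =>
    exact smoothBar_mul hΩ (smoothBar_const _) (smoothBar_Mop hΩ hρ hq ih a b (s + l))

theorem psiSeq_rec {ρ q ψ₀ : En n → ℝ} (a b c s : ℝ) (l : ℕ)
    (h : Pc a b c (s + l + 1) ≠ 0) (x : En n) :
    Pc a b c (s + l + 1) * psiSeq ρ q a b c s ψ₀ (l+1) x
      = - Mop ρ q a b (s + l) (psiSeq ρ q a b c s ψ₀ l) x := by
  show Pc a b c (s + l + 1) * ((-(Pc a b c (s + l + 1))⁻¹) * _) = _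
  field_simp

end Helpers5
/-- **Case 1 of Example 2.1, improved**: under the nonresonance condition at
`s+1, …, s+m`, the correction terms `ψ_1, …, ψ_m` can be chosen so that
`L((Σ ψ_l ρ^l)ρˢ) = ηρ^{s+m+1}`. -/
theorem singular_monomial_factor_improved
    {n : ℕ} (Ω : Set (En n)) (hΩo : IsOpen Ω) (hΩb : Bornology.IsBounded Ω)
    (hΩconn : IsConnected Ω)
    (ρ : En n → ℝ) (ν : En n → Fin n → ℝ)
    (hdef : DefiningFn Ω ρ ν) (hρ : SmoothBar Ω ρ)
    (q : En n → ℝ) (hq : SmoothBar Ω q)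
    (hq' : ∀ x ∈ Ω, 1 - (∑ i, (pd i ρ x) ^ 2) = ρ x * q x)
    (a b c s : ℝ) (ha : 0 < a) (hs : 0 < s)
    (hroot : a * s * (s - 1) + b * s + c = 0)
    (m : ℕ) (hm : 1 ≤ m)
    (hnres : ∀ l : ℕ, 1 ≤ l → l ≤ m →
      a * (s + l) * (s + l - 1) + b * (s + l) + c ≠ 0)
    (ψ₀ : En n → ℝ) (hψ₀ : SmoothBar Ω ψ₀) :
    ∃ ψ : ℕ → (En n → ℝ), ψ 0 = ψ₀ ∧ (∀ l, l ≤ m → SmoothBar Ω (ψ l)) ∧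
      ∃ η : En n → ℝ, SmoothBar Ω η ∧
        ∀ x ∈ Ω,
          LopEx ρ a b c
            (fun y => (∑ l ∈ Finset.range (m + 1), ψ l y * ρ y ^ l) * ρ y ^ s) x
          = η x * ρ x ^ (s + m + 1) := by
  have hρpos : ∀ x ∈ Ω, 0 < ρ x := hdef.1
  set Ψ : ℕ → En n → ℝ := psiSeq ρ q a b c s ψ₀ with hΨdef
  have hΨsm : ∀ l, SmoothBar Ω (Ψ l) := psiSeq_smoothBar hΩo hρ hq hψ₀ a b c s
  refine ⟨Ψ, rfl, fun l _ => hΨsm l, Mop ρ q a b (s + m) (Ψ m), ?_, ?_⟩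
  · exact smoothBar_Mop hΩo hρ hq (hΨsm m) a b (s + m)
  intro x hx
  -- rewrite the function as a sum of rpow terms
  have hEq : Set.EqOn (fun y => (∑ l ∈ Finset.range (m + 1), Ψ l y * ρ y ^ l) * ρ y ^ s)
      (fun y => ∑ l ∈ Finset.range (m + 1), Ψ l y * ρ y ^ (s + (l:ℝ))) Ω := by
    intro y hy
    show (∑ l ∈ Finset.range (m + 1), Ψ l y * ρ y ^ l) * ρ y ^ s = _
    rw [Finset.sum_mul]
    refine Finset.sum_congr rfl fun l _ => ?_
    have hp : ρ y ^ (s + (l:ℝ)) = ρ y ^ s * ρ y ^ (l:ℕ) := by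
      rw [Real.rpow_add (hρpos y hy), Real.rpow_natCast]
    rw [hp]; ring
  rw [lopEx_congr hΩo ρ a b c hEq hx]
  have hrpowΩ : ∀ u : ℝ, ContDiffOn ℝ (⊤:ℕ∞) (fun y => ρ y ^ u) Ω := fun u y hy =>
    ((hρ.1.contDiffAt (hΩo.mem_nhds hy)).rpow_const_of_ne
      (ne_of_gt (hρpos y hy))).contDiffWithinAt
  rw [lopEx_sum hΩo ρ a b c (Finset.range (m+1))
    (fun l y => Ψ l y * ρ y ^ (s + (l:ℝ))) (fun l _ => (hΨsm l).1.mul (hrpowΩ _)) hx]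
  have hterm : ∀ l ∈ Finset.range (m + 1),
      LopEx ρ a b c (fun y => Ψ l y * ρ y ^ (s + (l:ℝ))) x
        = Pc a b c (s + l) * (Ψ l x * ρ x ^ (s + (l:ℝ)))
          + ρ x ^ (s + (l:ℝ) + 1) * Mop ρ q a b (s + l) (Ψ l) x := fun l _ =>
    lop_term hΩo hρ.1 hρpos hq' (hΨsm l).1 a b c (s + l) hx
  rw [Finset.sum_congr rfl hterm, Finset.sum_add_distrib,
    Finset.sum_range_succ' (fun l => Pc a b c (s + l) * (Ψ l x * ρ x ^ (s + (l:ℝ)))) m,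
    Finset.sum_range_succ (fun l => ρ x ^ (s + (l:ℝ) + 1) * Mop ρ q a b (s + l) (Ψ l) x) m]
  have hA0 : Pc a b c (s + (0:ℕ)) * (Ψ 0 x * ρ x ^ (s + ((0:ℕ):ℝ))) = 0 := by
    have : Pc a b c (s + (0:ℕ)) = 0 := by
      unfold Pc; push_cast; linear_combination hroot
    rw [this, zero_mul]
  have hAl : ∀ l ∈ Finset.range m,
      Pc a b c (s + ((l+1:ℕ):ℝ)) * (Ψ (l+1) x * ρ x ^ (s + ((l+1:ℕ):ℝ)))
        = -(ρ x ^ (s + (l:ℝ) + 1) * Mop ρ q a b (s + l) (Ψ l) x) := by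
    intro l hl
    have hcast : (s + ((l+1:ℕ):ℝ)) = s + (l:ℝ) + 1 := by push_cast; ring
    rw [hcast]
    have hne : Pc a b c (s + (l:ℝ) + 1) ≠ 0 := by
      have h1 := hnres (l+1) (Nat.le_add_left 1 l) (Nat.succ_le_of_lt (Finset.mem_range.mp hl))
      have h2 : Pc a b c (s + (l:ℝ) + 1)
          = a * (s + ((l+1:ℕ):ℝ)) * (s + ((l+1:ℕ):ℝ) - 1) + b * (s + ((l+1:ℕ):ℝ)) + c := by
        unfold Pc; push_cast; ring
      rw [h2]; exact h1
    have hrec := psiSeq_rec (ρ := ρ) (q := q) (ψ₀ := ψ₀) a b c s l hne x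
    linear_combination (ρ x ^ (s + (l:ℝ) + 1)) * hrec
  rw [Finset.sum_congr rfl hAl, hA0]
  rw [Finset.sum_neg_distrib]
  push_cast
  ring
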